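/- Let p be an odd prime, ζ a primitive p-th root of unity, and σ, τ two distinct ring endomorphisms of ℤ[ζ]. Let D : ℤ[ζ] → ℤ[ζ] be a ℤ-linear map with D(1) = 0. Then D is a (σ,τ)-derivation if and only if D(ζ^k) = (Σ_{(i,j): i+j=k−1} σ(ζ)^i · τ(ζ)^j) · D(ζ) for all k ∈ {1, 2, ..., p−2}, where the sum runs over all pairs of non-negative integers (i,j) with i + j = k − 1. -/

import Mathlib

set_option maxHeartbeats 1000000 in
set_option synthInstance.maxHeartbeats 400000 in
/-- Let `p` be an odd prime, `ζ` a primitive `p`-th root of unity, and `σ`, `τ`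
two distinct ring endomorphisms of `ℤ[ζ]`.  Let `D : ℤ[ζ] → ℤ[ζ]` be a `ℤ`-linear map with
`D 1 = 0`.  Then `D` is a `(σ,τ)`-derivation if and only if
`D (ζ^k) = (Σ_{i+j=k-1} σ(ζ)^i * τ(ζ)^j) * D ζ` for all `k ∈ {1, …, p-2}`. -/
theorem stmt11 (p : ℕ) (hp : p.Prime) (hodd : Odd p) (ζ : ℂ) (hζ : IsPrimitiveRoot ζ p)
    (z : Algebra.adjoin ℤ ({ζ} : Set ℂ)) (hz : (z : ℂ) = ζ)
    (σ τ : Algebra.adjoin ℤ ({ζ} : Set ℂ) →+* Algebra.adjoin ℤ ({ζ} : Set ℂ))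
    (hστ : σ ≠ τ)
    (D : Algebra.adjoin ℤ ({ζ} : Set ℂ) →ₗ[ℤ] Algebra.adjoin ℤ ({ζ} : Set ℂ))
    (hD1 : D 1 = 0) :
    (∀ x y, D (x * y) = D x * τ y + σ x * D y) ↔
      (∀ k : ℕ, 1 ≤ k → k ≤ p - 2 →
        D (z ^ k) = (∑ ij ∈ Finset.HasAntidiagonal.antidiagonal (k - 1), σ z ^ ij.1 * τ z ^ ij.2) * D z) := by
  have hp3 : 3 ≤ p := by
    have h2 := hp.two_le
    have hne : p ≠ 2 := by rintro rfl; exact (by decide : ¬ Odd 2) hodd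
    omega
  -- `z ^ p = 1`
  have hzp : z ^ p = 1 := by
    apply Subtype.ext
    push_cast
    rw [hz]
    exact hζ.pow_eq_one
  -- the geometric sum of `z` vanishes
  have hs0 : ∑ i ∈ Finset.range p, z ^ i = 0 := by
    apply Subtype.ext
    push_cast
    rw [hz]
    exact hζ.geom_sum_eq_zero hp.one_lt
  -- the adjoin is generated (as a ring) by `z`
  have hpre : (((↑) : Algebra.adjoin ℤ ({ζ} : Set ℂ) → ℂ) ⁻¹' ({ζ} : Set ℂ)) = {z} := by
    ext x
    simp [Set.mem_preimage, Set.mem_singleton_iff, Subtype.ext_iff, hz]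
  have htop : Algebra.adjoin ℤ ({z} : Set (Algebra.adjoin ℤ ({ζ} : Set ℂ))) = ⊤ := by
    rw [← hpre]; exact Algebra.adjoin_adjoin_coe_preimage
  -- `σ z ≠ τ z`
  have hστz : σ z ≠ τ z := by
    intro h
    apply hστ
    refine RingHom.ext fun x => ?_
    have hx : x ∈ Algebra.adjoin ℤ ({z} : Set (Algebra.adjoin ℤ ({ζ} : Set ℂ))) := by
      rw [htop]; trivial
    induction hx using Algebra.adjoin_induction with
    | mem a ha => rw [Set.mem_singleton_iff.mp ha]; exact h
    | algebraMap r =>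
      simp only [algebraMap_int_eq, eq_intCast]
      rw [map_intCast, map_intCast]
    | add a b ha hb hA hB => rw [map_add σ a b, map_add τ a b, hA, hB]
    | mul a b ha hb hA hB => rw [map_mul σ a b, map_mul τ a b, hA, hB]
  have hu : σ z - τ z ≠ 0 := sub_ne_zero.mpr hστz
  -- geometric sum identity
  have hgeom : ∀ k : ℕ, 1 ≤ k →
      (∑ ij ∈ Finset.HasAntidiagonal.antidiagonal (k - 1), σ z ^ ij.1 * τ z ^ ij.2) * (σ z - τ z)
        = σ z ^ k - τ z ^ k := by
    intro k hk
    rw [Finset.Nat.sum_antidiagonal_eq_sum_range_succ (fun i j => σ z ^ i * τ z ^ j) (k - 1),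
        Nat.succ_eq_add_one, Nat.sub_add_cancel hk]
    exact geom_sum₂_mul (σ z) (τ z) k
  -- every element lies in the `ℤ`-span of the powers of `z`
  have hspan : ∀ x : Algebra.adjoin ℤ ({ζ} : Set ℂ),
      x ∈ Submodule.span ℤ (Set.range fun n : ℕ => z ^ n) := by
    intro x
    have hx : x ∈ Subalgebra.toSubmodule
        (Algebra.adjoin ℤ ({z} : Set (Algebra.adjoin ℤ ({ζ} : Set ℂ)))) := by
      rw [htop]; trivial
    rw [Algebra.adjoin_eq_span] at hx
    refine Submodule.span_le.mpr ?_ hx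
    rintro y hy
    obtain ⟨n, rfl⟩ := Submonoid.mem_closure_singleton.mp hy
    exact Submodule.subset_span ⟨n, rfl⟩
  constructor
  · -- derivation ⇒ formula
    intro hder k hk1 hk2
    have key : ∀ n : ℕ, (σ z - τ z) * D (z ^ n) = (σ z ^ n - τ z ^ n) * D z := by
      intro n
      induction n with
      | zero => simp [hD1]
      | succ n ih =>
        rw [pow_succ, hder (z ^ n) z, map_pow σ z n]
        linear_combination τ z * ih
    apply mul_left_cancel₀ hu
    rw [key k]
    linear_combination (- D z) * hgeom k hk1
  · -- formula ⇒ derivation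
    intro hf
    have keysmall : ∀ k : ℕ, k < p - 1 →
        (σ z - τ z) * D (z ^ k) = (σ z ^ k - τ z ^ k) * D z := by
      intro k hk
      rcases Nat.eq_zero_or_pos k with rfl | hk1
      · simp [hD1]
      · rw [hf k hk1 (by omega)]
        linear_combination D z * hgeom k hk1
    have keyp1 : (σ z - τ z) * D (z ^ (p - 1)) = (σ z ^ (p - 1) - τ z ^ (p - 1)) * D z := by
      have h2 : Finset.range p = Finset.range ((p - 1) + 1) := by congr 1; omega
      have h1 : ∑ i ∈ Finset.range (p - 1), D (z ^ i) + D (z ^ (p - 1)) = 0 := by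
        have h := congrArg D hs0
        rw [map_sum, map_zero, h2, Finset.sum_range_succ] at h
        exact h
      have hσs : ∑ i ∈ Finset.range (p - 1), σ z ^ i + σ z ^ (p - 1) = 0 := by
        have h := congrArg σ hs0
        rw [map_sum σ (fun i => z ^ i) (Finset.range p), map_zero] at h
        simp only [map_pow σ z] at h
        rw [h2, Finset.sum_range_succ] at h
        exact h
      have hτs : ∑ i ∈ Finset.range (p - 1), τ z ^ i + τ z ^ (p - 1) = 0 := by
        have h := congrArg τ hs0
        rw [map_sum τ (fun i => z ^ i) (Finset.range p), map_zero] at h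
        simp only [map_pow τ z] at h
        rw [h2, Finset.sum_range_succ] at h
        exact h
      have hX : (σ z - τ z) * ∑ i ∈ Finset.range (p - 1), D (z ^ i)
          = (∑ i ∈ Finset.range (p - 1), (σ z ^ i - τ z ^ i)) * D z := by
        rw [Finset.mul_sum, Finset.sum_mul]
        exact Finset.sum_congr rfl fun i hi => keysmall i (Finset.mem_range.mp hi)
      have hsplit : ∑ i ∈ Finset.range (p - 1), (σ z ^ i - τ z ^ i)
          = (∑ i ∈ Finset.range (p - 1), σ z ^ i) - ∑ i ∈ Finset.range (p - 1), τ z ^ i :=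
        Finset.sum_sub_distrib _ _
      have hDp : D (z ^ (p - 1)) = - ∑ i ∈ Finset.range (p - 1), D (z ^ i) := by
        linear_combination h1
      rw [hDp]
      linear_combination (-1 : Algebra.adjoin ℤ ({ζ} : Set ℂ)) * hX - D z * hsplit
        - D z * hσs + D z * hτs
    have keyall : ∀ k : ℕ, (σ z - τ z) * D (z ^ k) = (σ (z ^ k) - τ (z ^ k)) * D z := by
      intro k
      have hzk : z ^ k = z ^ (k % p) := by
        conv_lhs => rw [← Nat.div_add_mod k p]
        rw [pow_add, pow_mul, hzp, one_pow, one_mul]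
      rw [hzk, map_pow σ z (k % p), map_pow τ z (k % p)]
      have hkp : k % p < p := Nat.mod_lt _ hp.pos
      rcases Nat.lt_or_ge (k % p) (p - 1) with h | h
      · exact keysmall _ h
      · have hkp1 : k % p = p - 1 := by omega
        rw [hkp1]; exact keyp1
    have keyx : ∀ x : Algebra.adjoin ℤ ({ζ} : Set ℂ),
        (σ z - τ z) * D x = (σ x - τ x) * D z := by
      intro x
      induction hspan x using Submodule.span_induction with
      | mem a ha => obtain ⟨k, rfl⟩ := ha; exact keyall k
      | zero => simp
      | add a b ha hb hA hB =>
        rw [map_add D a b, map_add σ a b, map_add τ a b]; linear_combination hA + hB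
      | smul n a ha hA =>
        rw [map_smul D n a, map_zsmul σ n a, map_zsmul τ n a]
        simp only [zsmul_eq_mul]
        linear_combination (n : Algebra.adjoin ℤ ({ζ} : Set ℂ)) * hA
    intro x y
    apply mul_left_cancel₀ hu
    have h1 := keyx x
    have h2 := keyx y
    have h3 := keyx (x * y)
    rw [map_mul σ x y, map_mul τ x y] at h3
    linear_combination h3 - τ y * h1 - σ x * h2
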